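/- Let a, b, c be nonzero integers and n a positive natural number such that the equation a·x + b·y = c·w·z^n (in the variables w, x, y, z) is partition regular over ℕ. If p is a prime such that the p-adic valuation v_p((a+b)/c) is neither 0 nor a positive multiple of n, then at least one of a/c, b/c, (a+b)/c is an n-th power in the field ℚ_p of p-adic numbers. -/

import Mathlib

section All
variable {p : ℕ} [Fact p.Prime]

open Polynomial in
theorem nth_root_of_close (n : ℕ) (hn : 0 < n) (u : ℚ_[p])
    (hu : ‖u - 1‖ < ‖(n : ℚ_[p])‖ ^ 2) : ∃ h : ℚ_[p], h ^ n = u := by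
  have hnQ : (n : ℚ_[p]) ≠ 0 := by exact_mod_cast Nat.cast_ne_zero.mpr hn.ne'
  have hn1 : ‖(n : ℚ_[p])‖ ≤ 1 := Padic.norm_int_le_one n
  have hu1 : ‖u‖ ≤ 1 := by
    have := norm_add_le (u - 1) 1
    calc ‖u‖ = ‖(u - 1) + 1‖ := by ring_nf
    _ ≤ max ‖u - 1‖ ‖(1 : ℚ_[p])‖ := Padic.nonarchimedean _ _
    _ ≤ 1 := by
        rw [norm_one]
        refine max_le (le_trans hu.le ?_) le_rfl
        nlinarith [norm_nonneg ((n:ℚ_[p]))]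
  set u' : ℤ_[p] := ⟨u, hu1⟩ with hu'
  have key : ‖Polynomial.eval (1 : ℤ_[p]) (X ^ n - C u')‖ <
      ‖Polynomial.eval (1 : ℤ_[p]) (Polynomial.derivative (X ^ n - C u'))‖ ^ 2 := by
    have h1 : Polynomial.eval (1 : ℤ_[p]) (X ^ n - C u') = 1 - u' := by simp
    have h2 : Polynomial.derivative (X ^ n - C u' : ℤ_[p][X]) = C (n : ℤ_[p]) * X ^ (n - 1) := by
      simp [derivative_X_pow]
    rw [h1, h2]
    have : Polynomial.eval (1 : ℤ_[p]) (C (n : ℤ_[p]) * X ^ (n-1)) = n := by simp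
    rw [this]
    have e1 : ‖(1 - u' : ℤ_[p])‖ = ‖u - 1‖ := by
      rw [PadicInt.norm_def]
      have : ((1 - u' : ℤ_[p]) : ℚ_[p]) = -(u - 1) := by rw [PadicInt.coe_sub, PadicInt.coe_one, hu']; change (1:ℚ_[p]) - u = -(u - 1); ring
      rw [this, norm_neg]
    have e2 : ‖((n:ℕ) : ℤ_[p])‖ = ‖(n : ℚ_[p])‖ := by
      rw [PadicInt.norm_def]; norm_cast
    rw [e1, e2]; exact hu
  obtain ⟨z, hz, -⟩ := hensels_lemma key
  refine ⟨(z : ℚ_[p]), ?_⟩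
  have h0 : (z : ℚ_[p]) ^ n - u = 0 := by
    have := congrArg (fun q : ℤ_[p] => (q : ℚ_[p])) hz
    simp only [map_sub, map_pow, Polynomial.aeval_X, Polynomial.aeval_C, Algebra.algebraMap_self,
      RingHom.id_apply, Polynomial.eval_sub, Polynomial.eval_pow, Polynomial.eval_X, Polynomial.eval_C,
      PadicInt.coe_sub, PadicInt.coe_pow, PadicInt.coe_zero] at this
    exact this
  exact sub_eq_zero.mp h0


theorem nth_root_of_rel (n : ℕ) (hn : 0 < n) (s T : ℚ_[p]) (hT : T ≠ 0)
    (hrel : ‖s - T ^ n‖ < ‖(n : ℚ_[p])‖ ^ 2 * ‖T ^ n‖)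
    (hroot : ∀ u : ℚ_[p], ‖u - 1‖ < ‖(n : ℚ_[p])‖ ^ 2 → ∃ h : ℚ_[p], h ^ n = u) :
    ∃ t : ℚ_[p], t ^ n = s := by
  have hTn : T ^ n ≠ 0 := pow_ne_zero _ hT
  have hTn' : (0:ℝ) < ‖T ^ n‖ := norm_pos_iff.mpr hTn
  have hu : ‖s / T ^ n - 1‖ < ‖(n : ℚ_[p])‖ ^ 2 := by
    have : s / T ^ n - 1 = (s - T ^ n) / T ^ n := by field_simp
    rw [this, norm_div]
    rw [div_lt_iff₀ hTn']
    exact hrel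
  obtain ⟨h, hh⟩ := hroot _ hu
  exact ⟨T * h, by rw [mul_pow, hh]; field_simp⟩

/-- decomposition of a positive natural in ℚ_p -/
theorem nat_decomp (m : ℕ) (hm : 0 < m) :
    (m : ℚ_[p]) = (p : ℚ_[p]) ^ (padicValNat p m) * ((m / p ^ (padicValNat p m) : ℕ) : ℚ_[p]) ∧
    ‖((m / p ^ (padicValNat p m) : ℕ) : ℚ_[p])‖ = 1 := by
  have hp : p.Prime := Fact.out
  have hfac : padicValNat p m = m.factorization p := (Nat.factorization_def m hp).symm
  constructor
  · rw [hfac]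
    rw [← Nat.cast_pow, ← Nat.cast_mul]
    norm_cast
    exact (Nat.ordProj_mul_ordCompl_eq_self m p).symm
  · have hnd : ¬ (p ∣ m / p ^ (padicValNat p m)) := by
      rw [hfac]; exact Nat.not_dvd_ordCompl hp hm.ne'
    have h1 : ‖(((m / p ^ (padicValNat p m) : ℕ) : ℤ) : ℚ_[p])‖ < 1 ↔
        (p:ℤ) ∣ ((m / p ^ (padicValNat p m) : ℕ) : ℤ) := Padic.norm_intCast_lt_one_iff
    have h2 : ‖(((m / p ^ (padicValNat p m) : ℕ) : ℤ) : ℚ_[p])‖ ≤ 1 := Padic.norm_int_le_one _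
    rw [Int.cast_natCast] at h1 h2
    rcases lt_or_eq_of_le h2 with h | h
    · exfalso; exact hnd (by exact_mod_cast h1.mp h)
    · exact h

/-- congruent naturals are p-adically close -/
theorem nat_congr_close (u v K : ℕ) (h : u % p ^ K = v % p ^ K) :
    ‖(u : ℚ_[p]) - (v : ℚ_[p])‖ ≤ (p : ℝ) ^ (-(K:ℤ)) := by
  have hd : ((p : ℤ) ^ K) ∣ ((u : ℤ) - (v : ℤ)) := by
    have h' : (u:ℤ) ≡ v [ZMOD (p:ℤ)^K] := by
      have : u ≡ v [MOD p ^ K] := h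
      exact_mod_cast (Int.natCast_modEq_iff.mpr this)
    exact h'.symm.dvd
  have := (Padic.norm_int_le_pow_iff_dvd ((u:ℤ) - (v:ℤ)) K).mpr hd
  rw [Int.cast_sub] at this
  exact_mod_cast this

theorem norm_nat_val (m : ℕ) (hm : 0 < m) :
    ‖(m : ℚ_[p])‖ = (p : ℝ) ^ (-(padicValNat p m : ℤ)) := by
  obtain ⟨hdec, hu⟩ := nat_decomp (p := p) m hm
  rw [hdec, norm_mul, hu, mul_one, ← zpow_natCast, Padic.norm_p_zpow]

theorem norm_int_val (a : ℤ) (ha : a ≠ 0) :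
    ‖(a : ℚ_[p])‖ = (p : ℝ) ^ (-(padicValNat p a.natAbs : ℤ)) := by
  have : ‖(a : ℚ_[p])‖ = ‖((a.natAbs : ℕ) : ℚ_[p])‖ := by
    rcases Int.natAbs_eq a with h | h
    · conv_lhs => rw [h]
      rw [Int.cast_natCast]
    · conv_lhs => rw [h]
      rw [Int.cast_neg, Int.cast_natCast, norm_neg]
  rw [this, norm_nat_val _ (Int.natAbs_pos.mpr ha)]

/-- if the second is strictly smaller, sum has norm of the first -/
theorem norm_add_of_lt (x y : ℚ_[p]) (h : ‖y‖ < ‖x‖) : ‖x + y‖ = ‖x‖ := by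
  have := Padic.add_eq_max_of_ne (p := p) (q := x) (r := y) (ne_of_gt h)
  rw [this, max_eq_left h.le]


theorem nth_root_of_rel' (n : ℕ) (s T : ℚ_[p]) (hT : T ≠ 0)
    (hrel : ‖s - T ^ n‖ < ‖(n : ℚ_[p])‖ ^ 2 * ‖T ^ n‖)
    (hroot : ∀ u : ℚ_[p], ‖u - 1‖ < ‖(n : ℚ_[p])‖ ^ 2 → ∃ h : ℚ_[p], h ^ n = u) :
    ∃ t : ℚ_[p], t ^ n = s := by
  have hTn : T ^ n ≠ 0 := pow_ne_zero _ hT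
  have hTn' : (0:ℝ) < ‖T ^ n‖ := norm_pos_iff.mpr hTn
  have hu : ‖s / T ^ n - 1‖ < ‖(n : ℚ_[p])‖ ^ 2 := by
    have h' : s / T ^ n - 1 = (s - T ^ n) / T ^ n := by field_simp
    rw [h', norm_div, div_lt_iff₀ hTn']
    exact hrel
  obtain ⟨h, hh⟩ := hroot _ hu
  exact ⟨T * h, by rw [mul_pow, hh]; field_simp⟩

theorem abstract_case (n : ℕ) (hn : 0 < n) (UW UX UZ : ℚ_[p]) (J : ℤ)
    (hUW : ‖UW‖ = 1) (hUX : ‖UX‖ = 1) (hUZ : ‖UZ‖ = 1) (ε : ℝ)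
    (hcong : ‖UW - UX‖ ≤ ε) (hε : ε < ‖(n : ℚ_[p])‖ ^ 2)
    (s err G : ℚ_[p])
    (hG : G = ((p : ℚ_[p]) ^ J * UZ) ^ n * UW / UX)
    (hs : s = G - err) (herr : ‖err‖ < ‖(n : ℚ_[p])‖ ^ 2 * ‖G‖)
    (hroot : ∀ u : ℚ_[p], ‖u - 1‖ < ‖(n : ℚ_[p])‖ ^ 2 → ∃ h : ℚ_[p], h ^ n = u) :
    ∃ t : ℚ_[p], t ^ n = s := by
  have hPp : (p : ℚ_[p]) ≠ 0 := by
    exact_mod_cast Nat.cast_ne_zero.mpr (Fact.out : p.Prime).pos.ne'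
  have hUXne : UX ≠ 0 := by intro h; rw [h, norm_zero] at hUX; norm_num at hUX
  have hUZne : UZ ≠ 0 := by intro h; rw [h, norm_zero] at hUZ; norm_num at hUZ
  set T : ℚ_[p] := (p : ℚ_[p]) ^ J * UZ with hTdef
  have hT : T ≠ 0 := mul_ne_zero (zpow_ne_zero _ hPp) hUZne
  have hTn : T ^ n ≠ 0 := pow_ne_zero _ hT
  have hTnorm : ‖G‖ = ‖T ^ n‖ := by
    rw [hG, norm_div, norm_mul, hUW, hUX, mul_one, div_one]
  have hdiff : G - T ^ n = T ^ n * (UW - UX) / UX := by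
    rw [hG]; field_simp
  have hnd : ‖G - T ^ n‖ ≤ ‖T ^ n‖ * ε := by
    rw [hdiff, norm_div, norm_mul, hUX, div_one]
    exact mul_le_mul_of_nonneg_left hcong (norm_nonneg _)
  have hTpos : (0:ℝ) < ‖T ^ n‖ := norm_pos_iff.mpr hTn
  refine nth_root_of_rel' n s T hT ?_ hroot
  have : s - T ^ n = (G - T ^ n) - err := by rw [hs]; ring
  rw [this]
  calc ‖G - T ^ n - err‖ ≤ max ‖G - T ^ n‖ ‖err‖ := by
        have := Padic.nonarchimedean (G - T ^ n) (-err)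
        simpa [sub_eq_add_neg] using this
  _ < ‖(n : ℚ_[p])‖ ^ 2 * ‖T ^ n‖ := by
      apply max_lt
      · calc ‖G - T ^ n‖ ≤ ‖T ^ n‖ * ε := hnd
        _ < ‖T ^ n‖ * ‖(n : ℚ_[p])‖ ^ 2 := by
            exact mul_lt_mul_of_pos_left hε hTpos
        _ = ‖(n : ℚ_[p])‖ ^ 2 * ‖T ^ n‖ := mul_comm _ _
      · rw [← hTnorm]; exact herr


theorem nat_decomp' (m : ℕ) (hm : 0 < m) :
    (m : ℚ_[p]) = (p : ℚ_[p]) ^ (padicValNat p m) * ((m / p ^ (padicValNat p m) : ℕ) : ℚ_[p]) := by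
  have hp : p.Prime := Fact.out
  have hfac : padicValNat p m = m.factorization p := (Nat.factorization_def m hp).symm
  rw [hfac, ← Nat.cast_pow, ← Nat.cast_mul]
  norm_cast
  exact (Nat.ordProj_mul_ordCompl_eq_self m p).symm

theorem G_eq (n : ℕ) (w x z : ℕ) (hw : 0 < w) (hx : 0 < x) (hz : 0 < z)
    (hdvd : (n : ℤ) ∣ ((padicValNat p w : ℤ) - (padicValNat p x : ℤ)))
    (hUXne : ((x / p ^ (padicValNat p x) : ℕ) : ℚ_[p]) ≠ 0) :
    ∃ J : ℤ, (w : ℚ_[p]) * (z : ℚ_[p]) ^ n / (x : ℚ_[p]) =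
      ((p : ℚ_[p]) ^ J * ((z / p ^ (padicValNat p z) : ℕ) : ℚ_[p])) ^ n *
      ((w / p ^ (padicValNat p w) : ℕ) : ℚ_[p]) / ((x / p ^ (padicValNat p x) : ℕ) : ℚ_[p]) := by
  obtain ⟨k, hk⟩ := hdvd
  refine ⟨(padicValNat p z : ℤ) + k, ?_⟩
  have hPp : (p : ℚ_[p]) ≠ 0 := by
    exact_mod_cast Nat.cast_ne_zero.mpr (Fact.out : p.Prime).pos.ne'
  have hxne : (x : ℚ_[p]) ≠ 0 := by exact_mod_cast Nat.cast_ne_zero.mpr hx.ne'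
  set Ew := padicValNat p w
  set Ex := padicValNat p x
  set Ez := padicValNat p z
  set UW := ((w / p ^ Ew : ℕ) : ℚ_[p])
  set UX := ((x / p ^ Ex : ℕ) : ℚ_[p])
  set UZ := ((z / p ^ Ez : ℕ) : ℚ_[p])
  have dw : (w : ℚ_[p]) = (p : ℚ_[p]) ^ Ew * UW := nat_decomp' w hw
  have dx : (x : ℚ_[p]) = (p : ℚ_[p]) ^ Ex * UX := nat_decomp' x hx
  have dz : (z : ℚ_[p]) = (p : ℚ_[p]) ^ Ez * UZ := nat_decomp' z hz
  have key : ((p : ℚ_[p]) ^ ((Ez : ℤ) + k)) ^ n * (p : ℚ_[p]) ^ (Ex : ℤ) =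
      (p : ℚ_[p]) ^ (Ew : ℤ) * ((p : ℚ_[p]) ^ (Ez : ℤ)) ^ n := by
    rw [← zpow_natCast ((p : ℚ_[p]) ^ ((Ez : ℤ) + k)) n, ← zpow_mul,
      ← zpow_natCast ((p : ℚ_[p]) ^ (Ez : ℤ)) n, ← zpow_mul,
      ← zpow_add₀ hPp, ← zpow_add₀ hPp]
    congr 1
    have : (n : ℤ) * k = (Ew : ℤ) - Ex := hk.symm
    ring_nf
    linarith [this]
  rw [dw, dx, dz]
  rw [div_eq_div_iff (by rw [← dx]; exact hxne) hUXne]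
  rw [mul_pow, mul_pow]
  simp only [zpow_natCast, ← pow_mul] at key
  linear_combination (-(UZ ^ n * UW * UX)) * key

theorem zpow_neg_lt {q : ℝ} (hq : 1 < q) {m k : ℤ} (h : m < k) : q ^ (-k) < q ^ (-m) :=
  zpow_lt_zpow_right₀ hq (by omega)

end All


set_option maxHeartbeats 1000000 in


/-- If `a*x + b*y = c*w*z^n` is partition regular over the positive integers and `p` is a
prime such that `v_p((a+b)/c)` is neither `0` nor a positive multiple of `n`, then one of
`a/c, b/c, (a+b)/c` is an `n`-th power in `ℚ_p`. -/
theorem stmt_13 (a b c : ℤ) (ha : a ≠ 0) (hb : b ≠ 0) (hc : c ≠ 0) (n : ℕ) (hn : 0 < n)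
    (hPR : ∀ (r : ℕ) (C : ℕ → Fin r), ∃ w x y z : ℕ,
      0 < w ∧ 0 < x ∧ 0 < y ∧ 0 < z ∧
      C w = C x ∧ C x = C y ∧ C y = C z ∧
      a * (x : ℤ) + b * (y : ℤ) = c * (w : ℤ) * (z : ℤ) ^ n)
    (p : ℕ) [Fact p.Prime]
    (hv0 : padicValRat p (((a : ℚ) + (b : ℚ)) / (c : ℚ)) ≠ 0)
    (hvn : ∀ m : ℕ, 0 < m → padicValRat p (((a : ℚ) + (b : ℚ)) / (c : ℚ)) ≠ (n : ℤ) * m) :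
    (∃ t : ℚ_[p], t ^ n = (a : ℚ_[p]) / (c : ℚ_[p])) ∨
    (∃ t : ℚ_[p], t ^ n = (b : ℚ_[p]) / (c : ℚ_[p])) ∨
    (∃ t : ℚ_[p], t ^ n = ((a : ℚ_[p]) + (b : ℚ_[p])) / (c : ℚ_[p])) := by
  by_cases hab : a + b = 0
  · right; right
    refine ⟨0, ?_⟩
    rw [zero_pow hn.ne']
    have h0 : (a : ℚ_[p]) + (b : ℚ_[p]) = 0 := by
      have := congrArg (fun t : ℤ => (t : ℚ_[p])) hab
      push_cast at this
      exact this
    rw [h0, zero_div]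
  -- main case
  have hp : p.Prime := Fact.out
  have hp1 : 1 < p := hp.one_lt
  have hq1 : (1:ℝ) < (p:ℝ) := by exact_mod_cast hp1
  have hq0 : (0:ℝ) < (p:ℝ) := by linarith
  set α := padicValNat p a.natAbs with hαdef
  set β := padicValNat p b.natAbs with hβdef
  set γ := padicValNat p c.natAbs with hγdef
  set δ := padicValNat p (a+b).natAbs with hδdef
  set vn := padicValNat p n with hvndef
  set K := 2*vn + δ + α + β + γ + 1 with hKdef
  set L := n * (K + α + β + 1) with hLdef
  have hL : 0 < L := by
    have : 0 < K + α + β + 1 := by omega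
    exact Nat.mul_pos hn this
  have hpK : 0 < p ^ K := pow_pos hp.pos _
  set C : ℕ → Fin (L * p ^ K) := fun m =>
    finProdFinEquiv (⟨padicValNat p m % L, Nat.mod_lt _ hL⟩,
      ⟨(m / p ^ (padicValNat p m)) % p ^ K, Nat.mod_lt _ hpK⟩) with hCdef
  obtain ⟨w, x, y, z, hw, hx, hy, hz, hcwx, hcxy, hcyz, heq⟩ := hPR (L * p ^ K) C
  have decode : ∀ m m' : ℕ, C m = C m' →
      padicValNat p m % L = padicValNat p m' % L ∧
      (m / p ^ (padicValNat p m)) % p ^ K = (m' / p ^ (padicValNat p m')) % p ^ K := by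
    intro m m' h
    simp only [hCdef] at h
    have h2 := finProdFinEquiv.injective h
    simpa only [Prod.mk.injEq, Fin.mk.injEq] using h2
  have hwx := decode w x hcwx
  have hxy := decode x y hcxy
  have hwy := decode w y (hcwx.trans hcxy)
  obtain ⟨dw, nW⟩ := nat_decomp (p := p) w hw
  obtain ⟨dx, nX1⟩ := nat_decomp (p := p) x hx
  obtain ⟨dy, nY1⟩ := nat_decomp (p := p) y hy
  obtain ⟨dz, nZ1⟩ := nat_decomp (p := p) z hz
  set Ew := padicValNat p w with hEwdef
  set Ex := padicValNat p x with hExdef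
  set Ey := padicValNat p y with hEydef
  set Ez := padicValNat p z with hEzdef
  set UW : ℚ_[p] := ((w / p ^ Ew : ℕ) : ℚ_[p]) with hUWdef
  set UX : ℚ_[p] := ((x / p ^ Ex : ℕ) : ℚ_[p]) with hUXdef
  set UY : ℚ_[p] := ((y / p ^ Ey : ℕ) : ℚ_[p]) with hUYdef
  set UZ : ℚ_[p] := ((z / p ^ Ez : ℕ) : ℚ_[p]) with hUZdef
  have cwx : ‖UW - UX‖ ≤ (p:ℝ) ^ (-(K:ℤ)) := nat_congr_close _ _ _ hwx.2
  have cxy : ‖UX - UY‖ ≤ (p:ℝ) ^ (-(K:ℤ)) := nat_congr_close _ _ _ hxy.2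
  have cwy : ‖UW - UY‖ ≤ (p:ℝ) ^ (-(K:ℤ)) := nat_congr_close _ _ _ hwy.2
  have hUXne : UX ≠ 0 := by intro h0; rw [h0, norm_zero] at nX1; norm_num at nX1
  have hUYne : UY ≠ 0 := by intro h0; rw [h0, norm_zero] at nY1; norm_num at nY1
  -- divisibility facts
  have hnL : (n:ℤ) ∣ (L:ℤ) := ⟨(K + α + β + 1 : ℕ), by push_cast [hLdef]; ring⟩
  have hLwx : (L:ℤ) ∣ (Ew:ℤ) - (Ex:ℤ) := by
    have h' : Ew ≡ Ex [MOD L] := hwx.1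
    have h2 := h'.dvd
    have h3 := dvd_neg.mpr h2
    simpa [neg_sub] using h3
  have hLxy : (L:ℤ) ∣ (Ex:ℤ) - (Ey:ℤ) := by
    have h' : Ex ≡ Ey [MOD L] := hxy.1
    have h2 := h'.dvd
    have h3 := dvd_neg.mpr h2
    simpa [neg_sub] using h3
  have hLwy : (L:ℤ) ∣ (Ew:ℤ) - (Ey:ℤ) := by
    have h' : Ew ≡ Ey [MOD L] := hwy.1
    have h2 := h'.dvd
    have h3 := dvd_neg.mpr h2
    simpa [neg_sub] using h3
  -- cast of the equation
  have hEqQ : (a : ℚ_[p]) * x + (b : ℚ_[p]) * y = (c : ℚ_[p]) * w * (z : ℚ_[p]) ^ n := by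
    have := congrArg (fun t : ℤ => (t : ℚ_[p])) heq
    push_cast at this
    exact this
  -- norms
  have nA : ‖(a : ℚ_[p])‖ = (p:ℝ) ^ (-(α:ℤ)) := norm_int_val a ha
  have nB : ‖(b : ℚ_[p])‖ = (p:ℝ) ^ (-(β:ℤ)) := norm_int_val b hb
  have nC : ‖(c : ℚ_[p])‖ = (p:ℝ) ^ (-(γ:ℤ)) := norm_int_val c hc
  have nAB : ‖(a : ℚ_[p]) + (b : ℚ_[p])‖ = (p:ℝ) ^ (-(δ:ℤ)) := by
    have h1 : ((a + b : ℤ) : ℚ_[p]) = (a : ℚ_[p]) + (b : ℚ_[p]) := by push_cast; ring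
    rw [← h1]; exact norm_int_val (a+b) hab
  have nN : ‖(n : ℚ_[p])‖ = (p:ℝ) ^ (-(vn:ℤ)) := by
    have := norm_nat_val (p := p) n hn
    exact_mod_cast this
  have nX : ‖(x : ℚ_[p])‖ = (p:ℝ) ^ (-(Ex:ℤ)) := norm_nat_val x hx
  have nY : ‖(y : ℚ_[p])‖ = (p:ℝ) ^ (-(Ey:ℤ)) := norm_nat_val y hy
  have hxQ : (x : ℚ_[p]) ≠ 0 := by exact_mod_cast Nat.cast_ne_zero.mpr hx.ne'
  have hyQ : (y : ℚ_[p]) ≠ 0 := by exact_mod_cast Nat.cast_ne_zero.mpr hy.ne'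
  have hcQ : (c : ℚ_[p]) ≠ 0 := by exact_mod_cast Int.cast_ne_zero.mpr hc
  have hεn : (p:ℝ) ^ (-(K:ℤ)) < ‖(n : ℚ_[p])‖ ^ 2 := by
    rw [nN, sq, ← zpow_add₀ hq0.ne']
    apply zpow_lt_zpow_right₀ hq1
    push_cast [hKdef]
    omega
  have hroot : ∀ u : ℚ_[p], ‖u - 1‖ < ‖(n : ℚ_[p])‖ ^ 2 → ∃ h : ℚ_[p], h ^ n = u :=
    fun u hu => nth_root_of_close n hn u hu
  -- case split
  rcases le_or_gt (α + Ex + K) (β + Ey) with hcase | h1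
  · -- case (i) : b*y is much smaller; a/c is an n-th power
    left
    have hdvd : (n:ℤ) ∣ (Ew:ℤ) - (Ex:ℤ) := dvd_trans hnL hLwx
    obtain ⟨J, hGJ⟩ := G_eq n w x z hw hx hz hdvd hUXne
    set G := (w : ℚ_[p]) * (z : ℚ_[p]) ^ n / (x : ℚ_[p]) with hGdef
    set err := (b : ℚ_[p]) * y / ((c : ℚ_[p]) * x) with herrdef
    have hs : (a : ℚ_[p]) / (c : ℚ_[p]) = G - err := by
      rw [hGdef, herrdef]
      field_simp
      linear_combination hEqQ
    have hby : ‖(b : ℚ_[p]) * y‖ = (p:ℝ) ^ (-((β:ℤ) + Ey)) := by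
      rw [norm_mul, nB, nY, ← zpow_add₀ hq0.ne']
      congr 1; ring
    have hax : ‖(a : ℚ_[p]) * x‖ = (p:ℝ) ^ (-((α:ℤ) + Ex)) := by
      rw [norm_mul, nA, nX, ← zpow_add₀ hq0.ne']
      congr 1; ring
    have hlt : ‖(b : ℚ_[p]) * y‖ < ‖(a : ℚ_[p]) * x‖ := by
      rw [hby, hax]
      apply zpow_neg_lt hq1
      push_cast
      omega
    have hsum : ‖(a : ℚ_[p]) * x + (b : ℚ_[p]) * y‖ = ‖(a : ℚ_[p]) * x‖ :=
      norm_add_of_lt _ _ hlt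
    have hkey : ‖(b : ℚ_[p]) * y‖ < ‖(n : ℚ_[p])‖ ^ 2 * ‖(a : ℚ_[p]) * x + (b : ℚ_[p]) * y‖ := by
      rw [hsum, hby, hax, nN, sq, ← zpow_add₀ hq0.ne', ← zpow_add₀ hq0.ne']
      apply zpow_lt_zpow_right₀ hq1
      push_cast [hKdef] at hcase ⊢
      omega
    have e1 : err * ((c : ℚ_[p]) * x) = (b : ℚ_[p]) * y := by
      rw [herrdef]; field_simp
    have e2 : G * ((c : ℚ_[p]) * x) = (a : ℚ_[p]) * x + (b : ℚ_[p]) * y := by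
      rw [hGdef]; field_simp; linear_combination (-1 : ℚ_[p]) * hEqQ
    have hcx : (0:ℝ) < ‖(c : ℚ_[p]) * x‖ := norm_pos_iff.mpr (mul_ne_zero hcQ hxQ)
    have herr : ‖err‖ < ‖(n : ℚ_[p])‖ ^ 2 * ‖G‖ := by
      have h' := hkey
      rw [← e2, ← e1, norm_mul err ((c : ℚ_[p]) * x), norm_mul G ((c : ℚ_[p]) * x),
        ← mul_assoc] at h'
      exact lt_of_mul_lt_mul_right h' hcx.le
    exact abstract_case n hn UW UX UZ J nW nX1 nZ1 _ cwx hεn _ err G hGJ hs herr hroot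
  rcases le_or_gt (β + Ey + K) (α + Ex) with hcase | h2
  · -- case (ii) : a*x is much smaller; b/c is an n-th power
    right; left
    have hdvd : (n:ℤ) ∣ (Ew:ℤ) - (Ey:ℤ) := dvd_trans hnL hLwy
    obtain ⟨J, hGJ⟩ := G_eq n w y z hw hy hz hdvd hUYne
    set G := (w : ℚ_[p]) * (z : ℚ_[p]) ^ n / (y : ℚ_[p]) with hGdef
    set err := (a : ℚ_[p]) * x / ((c : ℚ_[p]) * y) with herrdef
    have hs : (b : ℚ_[p]) / (c : ℚ_[p]) = G - err := by
      rw [hGdef, herrdef]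
      field_simp
      linear_combination hEqQ
    have hby : ‖(b : ℚ_[p]) * y‖ = (p:ℝ) ^ (-((β:ℤ) + Ey)) := by
      rw [norm_mul, nB, nY, ← zpow_add₀ hq0.ne']
      congr 1; ring
    have hax : ‖(a : ℚ_[p]) * x‖ = (p:ℝ) ^ (-((α:ℤ) + Ex)) := by
      rw [norm_mul, nA, nX, ← zpow_add₀ hq0.ne']
      congr 1; ring
    have hlt : ‖(a : ℚ_[p]) * x‖ < ‖(b : ℚ_[p]) * y‖ := by
      rw [hby, hax]
      apply zpow_neg_lt hq1
      push_cast
      omega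
    have hsum : ‖(b : ℚ_[p]) * y + (a : ℚ_[p]) * x‖ = ‖(b : ℚ_[p]) * y‖ :=
      norm_add_of_lt _ _ hlt
    have hkey : ‖(a : ℚ_[p]) * x‖ < ‖(n : ℚ_[p])‖ ^ 2 * ‖(b : ℚ_[p]) * y + (a : ℚ_[p]) * x‖ := by
      rw [hsum, hby, hax, nN, sq, ← zpow_add₀ hq0.ne', ← zpow_add₀ hq0.ne']
      apply zpow_lt_zpow_right₀ hq1
      push_cast [hKdef] at hcase ⊢
      omega
    have e1 : err * ((c : ℚ_[p]) * y) = (a : ℚ_[p]) * x := by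
      rw [herrdef]; field_simp
    have e2 : G * ((c : ℚ_[p]) * y) = (b : ℚ_[p]) * y + (a : ℚ_[p]) * x := by
      rw [hGdef]; field_simp; linear_combination (-1 : ℚ_[p]) * hEqQ
    have hcy : (0:ℝ) < ‖(c : ℚ_[p]) * y‖ := norm_pos_iff.mpr (mul_ne_zero hcQ hyQ)
    have herr : ‖err‖ < ‖(n : ℚ_[p])‖ ^ 2 * ‖G‖ := by
      have h' := hkey
      rw [← e2, ← e1, norm_mul err ((c : ℚ_[p]) * y), norm_mul G ((c : ℚ_[p]) * y),
        ← mul_assoc] at h'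
      exact lt_of_mul_lt_mul_right h' hcy.le
    exact abstract_case n hn UW UY UZ J nW nY1 nZ1 _ cwy hεn _ err G hGJ hs herr hroot
  · -- case (iii) : comparable sizes; (a+b)/c is an n-th power
    right; right
    -- first derive Ex = Ey
    have hExEy : Ex = Ey := by
      obtain ⟨k, hk⟩ := hLxy
      have hbound : |(Ex:ℤ) - (Ey:ℤ)| < (L:ℤ) := by
        rw [abs_lt]
        have hα' : (α:ℤ) ≥ 0 := Int.natCast_nonneg _
        have hβ' : (β:ℤ) ≥ 0 := Int.natCast_nonneg _
        have hL' : (L:ℤ) ≥ (K:ℤ) + α + β + 1 := by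
          have : (1:ℤ) ≤ n := by exact_mod_cast hn
          push_cast [hLdef]
          nlinarith [Int.natCast_nonneg (K + α + β + 1)]
        constructor <;> [skip; skip] <;> push_cast at h1 h2 ⊢ <;> omega
      rw [hk] at hbound
      have hk0 : k = 0 := by
        rcases lt_trichotomy k 0 with h' | h' | h'
        · exfalso
          have : (L:ℤ) * k ≤ -L := by nlinarith [Int.natCast_pos.mpr hL]
          rw [abs_lt] at hbound
          omega
        · exact h'
        · exfalso
          have : (L:ℤ) ≤ L * k := by nlinarith [Int.natCast_pos.mpr hL]
          rw [abs_lt] at hbound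
          omega
      have : (Ex:ℤ) - (Ey:ℤ) = 0 := by rw [hk, hk0, mul_zero]
      omega
    have hdvd : (n:ℤ) ∣ (Ew:ℤ) - (Ex:ℤ) := dvd_trans hnL hLwx
    obtain ⟨J, hGJ⟩ := G_eq n w x z hw hx hz hdvd hUXne
    set G := (w : ℚ_[p]) * (z : ℚ_[p]) ^ n / (x : ℚ_[p]) with hGdef
    set err := (b : ℚ_[p]) * ((y : ℚ_[p]) - (x : ℚ_[p])) / ((c : ℚ_[p]) * x) with herrdef
    have hs : ((a : ℚ_[p]) + (b : ℚ_[p])) / (c : ℚ_[p]) = G - err := by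
      rw [hGdef, herrdef]
      field_simp
      linear_combination hEqQ
    have hyx : ‖(y : ℚ_[p]) - (x : ℚ_[p])‖ ≤ (p:ℝ) ^ (-((Ex:ℤ) + K)) := by
      have hdiff : (y : ℚ_[p]) - (x : ℚ_[p]) = (p : ℚ_[p]) ^ Ex * (UY - UX) := by
        rw [dx, dy, ← hExEy]; ring
      rw [hdiff, norm_mul, Padic.norm_p_pow]
      calc (p:ℝ) ^ (-(Ex:ℤ)) * ‖UY - UX‖ ≤ (p:ℝ) ^ (-(Ex:ℤ)) * (p:ℝ) ^ (-(K:ℤ)) := by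
            apply mul_le_mul_of_nonneg_left _ (le_of_lt (zpow_pos hq0 _))
            rw [← norm_neg (UY - UX)]
            simpa [neg_sub] using cxy
      _ = (p:ℝ) ^ (-((Ex:ℤ) + K)) := by rw [← zpow_add₀ hq0.ne']; congr 1; ring
    have hbyx : ‖(b : ℚ_[p]) * ((y : ℚ_[p]) - (x : ℚ_[p]))‖ ≤ (p:ℝ) ^ (-((β:ℤ) + Ex + K)) := by
      rw [norm_mul, nB]
      calc (p:ℝ) ^ (-(β:ℤ)) * ‖(y : ℚ_[p]) - (x : ℚ_[p])‖
          ≤ (p:ℝ) ^ (-(β:ℤ)) * (p:ℝ) ^ (-((Ex:ℤ) + K)) :=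
            mul_le_mul_of_nonneg_left hyx (le_of_lt (zpow_pos hq0 _))
      _ = (p:ℝ) ^ (-((β:ℤ) + Ex + K)) := by rw [← zpow_add₀ hq0.ne']; congr 1; ring
    have habx : ‖((a : ℚ_[p]) + (b : ℚ_[p])) * x‖ = (p:ℝ) ^ (-((δ:ℤ) + Ex)) := by
      rw [norm_mul, nAB, nX, ← zpow_add₀ hq0.ne']
      congr 1; ring
    have hlt : ‖(b : ℚ_[p]) * ((y : ℚ_[p]) - (x : ℚ_[p]))‖ < ‖((a : ℚ_[p]) + (b : ℚ_[p])) * x‖ := by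
      rw [habx]
      calc ‖(b : ℚ_[p]) * ((y : ℚ_[p]) - (x : ℚ_[p]))‖ ≤ (p:ℝ) ^ (-((β:ℤ) + Ex + K)) := hbyx
      _ < (p:ℝ) ^ (-((δ:ℤ) + Ex)) := by
          apply zpow_neg_lt hq1
          push_cast [hKdef]
          omega
    have hsum : ‖((a : ℚ_[p]) + (b : ℚ_[p])) * x + (b : ℚ_[p]) * ((y : ℚ_[p]) - (x : ℚ_[p]))‖
        = ‖((a : ℚ_[p]) + (b : ℚ_[p])) * x‖ := norm_add_of_lt _ _ hlt
    have hkey : ‖(b : ℚ_[p]) * ((y : ℚ_[p]) - (x : ℚ_[p]))‖ < ‖(n : ℚ_[p])‖ ^ 2 *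
        ‖((a : ℚ_[p]) + (b : ℚ_[p])) * x + (b : ℚ_[p]) * ((y : ℚ_[p]) - (x : ℚ_[p]))‖ := by
      rw [hsum, habx, nN, sq, ← zpow_add₀ hq0.ne', ← zpow_add₀ hq0.ne']
      calc ‖(b : ℚ_[p]) * ((y : ℚ_[p]) - (x : ℚ_[p]))‖ ≤ (p:ℝ) ^ (-((β:ℤ) + Ex + K)) := hbyx
      _ < (p:ℝ) ^ (-(vn:ℤ) + -(vn:ℤ) + (-((δ:ℤ) + Ex))) := by
          apply zpow_lt_zpow_right₀ hq1
          push_cast [hKdef]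
          omega
    have e1 : err * ((c : ℚ_[p]) * x) = (b : ℚ_[p]) * ((y : ℚ_[p]) - (x : ℚ_[p])) := by
      rw [herrdef]; field_simp
    have e2 : G * ((c : ℚ_[p]) * x) =
        ((a : ℚ_[p]) + (b : ℚ_[p])) * x + (b : ℚ_[p]) * ((y : ℚ_[p]) - (x : ℚ_[p])) := by
      rw [hGdef]; field_simp; linear_combination (-1 : ℚ_[p]) * hEqQ
    have hcx : (0:ℝ) < ‖(c : ℚ_[p]) * x‖ := norm_pos_iff.mpr (mul_ne_zero hcQ hxQ)
    have herr : ‖err‖ < ‖(n : ℚ_[p])‖ ^ 2 * ‖G‖ := by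
      have h' := hkey
      rw [← e2, ← e1, norm_mul err ((c : ℚ_[p]) * x), norm_mul G ((c : ℚ_[p]) * x),
        ← mul_assoc] at h'
      exact lt_of_mul_lt_mul_right h' hcx.le
    exact abstract_case n hn UW UX UZ J nW nX1 nZ1 _ cwx hεn _ err G hGJ hs herr hroot
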